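/- Let n ≥ 2, ℓ ≥ 1, and let v₁,…,vₙ : Fin ℓ → ℝ be nonzero binary vectors. Let γ ≥ 1 and write cos(i,j) = ⟨vᵢ, vⱼ⟩ / (‖vᵢ‖ · ‖vⱼ‖). Suppose i* ≠ j* is a pair of indices satisfying min_{i ≠ j} cos(i,j) ≤ cos(i*,j*) ≤ γ · min_{i ≠ j} cos(i,j) (i.e., (i*, j*) is a γ-approximate least similar pair). Then cos(i*, j*) = 0 if and only if there exist i ≠ j with ⟨vᵢ, vⱼ⟩ = 0. -/
import Mathlib


open Finset

/-- The Euclidean norm of a vector indexed by a finite type. -/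
noncomputable def euclNorm {ι : Type*} [Fintype ι] (v : ι → ℝ) : ℝ :=
  Real.sqrt (∑ t, (v t) ^ 2)

/-- Correctness of the reduction from Orthogonal Vectors to the γ-approximate Least
Similar Documents problem: a γ-approximate least similar pair has cosine similarity 0
iff there is an orthogonal pair. -/
theorem stmt4 (n ℓ : ℕ) (hn : 2 ≤ n) (hℓ : 1 ≤ ℓ)
    (v : Fin n → Fin ℓ → ℝ)
    (hbin : ∀ i t, v i t = 0 ∨ v i t = 1)
    (hnz : ∀ i, v i ≠ 0)
    (γ : ℝ) (hγ : 1 ≤ γ)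
    (c : Fin n → Fin n → ℝ)
    (hc : ∀ i j, c i j = (∑ t, v i t * v j t) / (euclNorm (v i) * euclNorm (v j)))
    (m : ℝ)
    (hm : IsLeast {x : ℝ | ∃ i j : Fin n, i ≠ j ∧ x = c i j} m)
    (istar jstar : Fin n) (hne : istar ≠ jstar)
    (h1 : m ≤ c istar jstar) (h2 : c istar jstar ≤ γ * m) :
    c istar jstar = 0 ↔ ∃ i j : Fin n, i ≠ j ∧ (∑ t, v i t * v j t) = 0 := by
  have hnorm : ∀ i, 0 < euclNorm (v i) := by
    intro i
    apply Real.sqrt_pos.mpr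
    have h0 : ∀ t, 0 ≤ (v i t) ^ 2 := fun t => sq_nonneg _
    rcases Function.ne_iff.mp (hnz i) with ⟨t, ht⟩
    have : 0 < (v i t) ^ 2 := by
      rcases hbin i t with h | h
      · exact absurd h ht
      · simp [h]
    exact Finset.sum_pos' (fun t _ => h0 t) ⟨t, Finset.mem_univ t, this⟩
  have hip : ∀ i j, 0 ≤ ∑ t, v i t * v j t := by
    intro i j
    apply Finset.sum_nonneg
    intro t _
    rcases hbin i t with h | h <;> rcases hbin j t with h' | h' <;> simp [h, h']
  have hcnn : ∀ i j, 0 ≤ c i j := by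
    intro i j
    rw [hc]
    exact div_nonneg (hip i j) (le_of_lt (mul_pos (hnorm i) (hnorm j)))
  have hm0 : 0 ≤ m := by
    obtain ⟨⟨i, j, _, hx⟩, _⟩ := hm
    rw [hx]; exact hcnn i j
  constructor
  · intro h
    refine ⟨istar, jstar, hne, ?_⟩
    rw [hc] at h
    rcases div_eq_zero_iff.mp h with h | h
    · exact h
    · exact absurd h (ne_of_gt (mul_pos (hnorm istar) (hnorm jstar)))
  · rintro ⟨i, j, hij, hz⟩
    have hcij : c i j = 0 := by rw [hc, hz, zero_div]
    have : m ≤ 0 := by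
      have := hm.2 ⟨i, j, hij, rfl⟩
      rwa [hcij] at this
    have hmeq : m = 0 := le_antisymm this hm0
    have := h2
    rw [hmeq, mul_zero] at this
    exact le_antisymm this (hcnn istar jstar)
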